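/- Let F be a field and let S be a subset of M_2(F) whose generated unital subalgebra is all of M_2(F). Then the F-linear span of all products of between 1 and 2 elements of S is all of M_2(F). In other words, l_0(S) ≤ 2 for every generating set S of M_2(F), so l_0(M_2(F)) = 2. -/
import Mathlib

open Matrix Submodule

section AuxLemmas

variable {F : Type*} [Field F]

/-- polarization of det for 2x2 matrices -/
def Bform (x y : Matrix (Fin 2) (Fin 2) F) : F :=
  x.trace * y.trace - (x * y).trace

lemma sq_eq (m : Matrix (Fin 2) (Fin 2) F) :
    m * m = m.trace • m - m.det • (1 : Matrix (Fin 2) (Fin 2) F) := by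
  ext i j
  fin_cases i <;> fin_cases j <;>
    simp [Matrix.mul_apply, Fin.sum_univ_two, Matrix.trace_fin_two, Matrix.det_fin_two,
      Matrix.one_apply, Matrix.sub_apply, Matrix.smul_apply, smul_eq_mul] <;> ring

lemma det_add' (x y : Matrix (Fin 2) (Fin 2) F) :
    (x + y).det = x.det + y.det + Bform x y := by
  simp [Bform, Matrix.det_fin_two, Matrix.trace_fin_two, Matrix.mul_apply, Fin.sum_univ_two,
    Matrix.add_apply]
  ring

lemma B_add_left (x y z : Matrix (Fin 2) (Fin 2) F) :
    Bform (x + y) z = Bform x z + Bform y z := by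
  simp [Bform, Matrix.trace_add, Matrix.add_mul, add_mul]; ring

lemma B_add_right (x y z : Matrix (Fin 2) (Fin 2) F) :
    Bform x (y + z) = Bform x y + Bform x z := by
  simp [Bform, Matrix.trace_add, Matrix.mul_add, mul_add]; ring

lemma B_smul_left (c : F) (x z : Matrix (Fin 2) (Fin 2) F) :
    Bform (c • x) z = c * Bform x z := by
  simp [Bform, Matrix.trace_smul, Matrix.smul_mul, smul_eq_mul]; ring

lemma B_smul_right (c : F) (x z : Matrix (Fin 2) (Fin 2) F) :
    Bform x (c • z) = c * Bform x z := by
  simp [Bform, Matrix.trace_smul, Matrix.mul_smul, smul_eq_mul]; ring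

lemma B_zero_left (z : Matrix (Fin 2) (Fin 2) F) : Bform 0 z = 0 := by
  simp [Bform]

lemma B_zero_right (z : Matrix (Fin 2) (Fin 2) F) : Bform z 0 = 0 := by
  simp [Bform]

lemma rank_one_decomp (m : Matrix (Fin 2) (Fin 2) F) (hm : m ≠ 0) (hdet : m.det = 0) :
    ∃ u w : Fin 2 → F, m = vecMulVec u w := by
  have hex : ∃ i j, m i j ≠ 0 := by
    by_contra h
    push_neg at h
    exact hm (by ext i j; simpa using h i j)
  obtain ⟨i, j, hij⟩ := hex
  refine ⟨fun i' => m i' j, fun j' => m i j' / m i j, ?_⟩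
  ext i' j'
  rw [vecMulVec_apply, mul_div_assoc', eq_div_iff hij]
  rw [Matrix.det_fin_two] at hdet
  fin_cases i <;> fin_cases j <;> fin_cases i' <;> fin_cases j' <;>
    simp only [Fin.mk_zero, Fin.mk_one] <;>
    (try ring) <;> (try linear_combination hdet) <;> linear_combination -hdet

lemma vecMulVec_mulVec' (u w v : Fin 2 → F) :
    (vecMulVec u w) *ᵥ v = (w ⬝ᵥ v) • u := by
  ext i
  simp [Matrix.mulVec, vecMulVec_apply, dotProduct, Fin.sum_univ_two, Pi.smul_apply,
    smul_eq_mul]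
  ring

lemma vecMul_vecMulVec' (φ u w : Fin 2 → F) :
    φ ᵥ* (vecMulVec u w) = (φ ⬝ᵥ u) • w := by
  ext j
  simp [Matrix.vecMul, vecMulVec_apply, dotProduct, Fin.sum_univ_two, Pi.smul_apply,
    smul_eq_mul]
  ring

lemma B_vecMulVec (u w u' w' : Fin 2 → F) :
    Bform (vecMulVec u w) (vecMulVec u' w') =
      ((![u 1, -(u 0)]) ⬝ᵥ u') * (w' ⬝ᵥ ![w 1, -(w 0)]) := by
  simp [Bform, Matrix.trace_fin_two, Matrix.mul_apply, Fin.sum_univ_two, vecMulVec_apply,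
    dotProduct]
  ring

lemma vecMul_matrix_smul (φ : Fin 2 → F) (c : F) (A : Matrix (Fin 2) (Fin 2) F) :
    φ ᵥ* (c • A) = c • (φ ᵥ* A) := by
  ext j
  simp [Matrix.vecMul, dotProduct, Fin.sum_univ_two, Matrix.smul_apply, smul_eq_mul]
  ring

end AuxLemmas

/-- `L_k^0(S)`: the `F`-linear span of all words in `S` of length between `1` and `k`. -/
def wordSpan0 (F : Type*) [Field F] (n k : ℕ) (S : Set (Matrix (Fin n) (Fin n) F)) :
    Submodule F (Matrix (Fin n) (Fin n) F) :=
  Submodule.span F {M | ∃ w : List (Matrix (Fin n) (Fin n) F),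
    1 ≤ w.length ∧ w.length ≤ k ∧ (∀ x ∈ w, x ∈ S) ∧ M = w.prod}

/-- For every generating set `S` of `M_2(F)`, the span of words of length between `1` and
`2` is all of `M_2(F)`; i.e. `l_0(S) ≤ 2`. -/
theorem stmt_3 (F : Type*) [Field F] (S : Set (Matrix (Fin 2) (Fin 2) F))
    (hgen : Algebra.adjoin F S = ⊤) :
    wordSpan0 F 2 2 S = ⊤ := by
  classical
  set L := wordSpan0 F 2 2 S with hLdef
  have hw1 : ∀ a ∈ S, a ∈ L := by
    intro a ha
    exact subset_span ⟨[a], by simp, by simp, by simpa using ha, by simp⟩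
  have hw2 : ∀ a ∈ S, ∀ b ∈ S, a * b ∈ L := by
    intro a ha b hb
    refine subset_span ⟨[a, b], by simp, by simp, ?_, by simp⟩
    intro x hx
    simp only [List.mem_cons, List.not_mem_nil, or_false] at hx
    rcases hx with rfl | rfl
    exacts [ha, hb]
  by_contra hLne
  -- a noncommuting pair in S
  have hnc : ∃ a ∈ S, ∃ b ∈ S, a * b ≠ b * a := by
    by_contra h
    push_neg at h
    have hcomm : ∀ x y : Matrix (Fin 2) (Fin 2) F, x * y = y * x := by
      intro x y
      have hx : x ∈ Algebra.adjoin F S := by rw [hgen]; trivial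
      have hy : y ∈ Algebra.adjoin F S := by rw [hgen]; trivial
      induction hx, hy using Algebra.adjoin_induction₂ with
      | mem_mem p q hp hq => exact h p hp q hq
      | algebraMap_both r₁ r₂ => exact Algebra.commutes r₁ _
      | algebraMap_left r p hp => exact Algebra.commutes r p
      | algebraMap_right r p hp => exact (Algebra.commutes r p).symm
      | add_left p q z _ _ _ h₁ h₂ => rw [add_mul, mul_add, h₁, h₂]
      | add_right p q z _ _ _ h₁ h₂ => rw [mul_add, add_mul, h₁, h₂]
      | mul_left p q z _ _ _ h₁ h₂ => rw [mul_assoc, h₂, ← mul_assoc, h₁, mul_assoc]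
      | mul_right p q z _ _ _ h₁ h₂ => rw [← mul_assoc, h₁, mul_assoc, h₂, ← mul_assoc]
    have h12 := hcomm !![(0:F),1;0,0] !![0,0;1,0]
    have hcontra := congrFun (congrFun h12 0) 0
    simp [Matrix.mul_apply, Fin.sum_univ_two] at hcontra
  obtain ⟨a, haS, b, hbS, hab⟩ := hnc
  have ha0 : a ≠ 0 := by rintro rfl; simp at hab
  -- W2 = L + F·1 is everything
  set W1 : Submodule F (Matrix (Fin 2) (Fin 2) F) := span F (insert 1 S) with hW1def
  set W2 : Submodule F (Matrix (Fin 2) (Fin 2) F) := L ⊔ span F {1} with hW2def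
  have hW12 : W1 ≤ W2 := by
    rw [hW1def, span_le]
    rintro x (rfl | hx)
    · exact Submodule.mem_sup_right (subset_span rfl)
    · exact Submodule.mem_sup_left (hw1 x hx)
  have hW2top : W2 = ⊤ := by
    rcases eq_or_lt_of_le hW12 with heq | hlt
    · -- W1 is closed under multiplication, hence a subalgebra containing S
      have key : ∀ g ∈ insert (1 : Matrix (Fin 2) (Fin 2) F) S, ∀ y ∈ W1, g * y ∈ W1 := by
        intro g hg y hy
        induction hy using span_induction with
        | mem z hz =>
          rcases hg with rfl | hg
          · rw [one_mul]; exact subset_span hz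
          rcases hz with rfl | hz
          · rw [mul_one]; exact subset_span (Set.mem_insert_of_mem _ hg)
          · rw [heq]; exact Submodule.mem_sup_left (hw2 g hg z hz)
        | zero => rw [mul_zero]; exact zero_mem _
        | add y z _ _ h₁ h₂ => rw [mul_add]; exact add_mem h₁ h₂
        | smul c y _ h₁ => rw [mul_smul_comm]; exact smul_mem _ _ h₁
      have hmul : ∀ x y : Matrix (Fin 2) (Fin 2) F, x ∈ W1 → y ∈ W1 → x * y ∈ W1 := by
        intro x y hx hy
        induction hx using span_induction with
        | mem g hg => exact key g hg y hy
        | zero => rw [zero_mul]; exact zero_mem _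
        | add x z _ _ h₁ h₂ => rw [add_mul]; exact add_mem h₁ h₂
        | smul c x _ h₁ => rw [smul_mul_assoc]; exact smul_mem _ _ h₁
      have h1W1 : (1 : Matrix (Fin 2) (Fin 2) F) ∈ W1 := subset_span (Set.mem_insert _ _)
      have hle : Algebra.adjoin F S ≤ W1.toSubalgebra h1W1 hmul :=
        Algebra.adjoin_le fun s hs => subset_span (Set.mem_insert_of_mem _ hs)
      rw [hgen] at hle
      rw [← heq]
      exact top_unique fun x _ => hle trivial
    · -- dimension count
      have hone_ne : (1 : Matrix (Fin 2) (Fin 2) F) ≠ 0 := by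
        intro h
        have := congrFun (congrFun h 0) 0
        simp at this
      have li : LinearIndependent F ![(1 : Matrix (Fin 2) (Fin 2) F), a, b] := by
        refine Fintype.linearIndependent_iff.2 fun g hg => ?_
        rw [Fin.sum_univ_three] at hg
        simp only [Matrix.cons_val_zero, Matrix.cons_val_one, Matrix.head_cons,
          Matrix.cons_val_two, Matrix.tail_cons] at hg
        have h1 : g 1 • (a * b - b * a) = 0 := by
          have hkey : (g 0 • 1 + g 1 • a + g 2 • b) * b - b * (g 0 • 1 + g 1 • a + g 2 • b)
              = g 1 • (a * b - b * a) := by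
            simp only [add_mul, mul_add, smul_mul_assoc, mul_smul_comm, one_mul, mul_one,
              smul_sub]
            abel
          rw [← hkey, hg, zero_mul, mul_zero, sub_zero]
        have h2 : g 2 • (a * b - b * a) = 0 := by
          have hkey : a * (g 0 • 1 + g 1 • a + g 2 • b) - (g 0 • 1 + g 1 • a + g 2 • b) * a
              = g 2 • (a * b - b * a) := by
            simp only [add_mul, mul_add, smul_mul_assoc, mul_smul_comm, one_mul, mul_one,
              smul_sub]
            abel
          rw [← hkey, hg, zero_mul, mul_zero, sub_zero]
        have hne : a * b - b * a ≠ 0 := sub_ne_zero.2 hab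
        have hg1 : g 1 = 0 := by
          rcases smul_eq_zero.1 h1 with h' | h'
          · exact h'
          · exact absurd h' hne
        have hg2 : g 2 = 0 := by
          rcases smul_eq_zero.1 h2 with h' | h'
          · exact h'
          · exact absurd h' hne
        have hg0 : g 0 = 0 := by
          rw [hg1, hg2, zero_smul, zero_smul, add_zero, add_zero] at hg
          rcases smul_eq_zero.1 hg with h' | h'
          · exact h'
          · exact absurd h' hone_ne
        intro i
        fin_cases i
        exacts [hg0, hg1, hg2]
      have hspan_le : span F (Set.range ![(1 : Matrix (Fin 2) (Fin 2) F), a, b]) ≤ W1 := by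
        rw [span_le]
        rintro x ⟨i, rfl⟩
        fin_cases i
        · exact subset_span (Set.mem_insert _ _)
        · exact subset_span (Set.mem_insert_of_mem _ haS)
        · exact subset_span (Set.mem_insert_of_mem _ hbS)
      have h3 : 3 ≤ Module.finrank F W1 := by
        have hcard := finrank_span_eq_card li
        rw [Fintype.card_fin] at hcard
        calc 3 = Module.finrank F (span F (Set.range ![(1 : Matrix (Fin 2) (Fin 2) F), a, b])) :=
              hcard.symm
          _ ≤ Module.finrank F W1 := Submodule.finrank_mono hspan_le
      have h4 : 4 ≤ Module.finrank F W2 := by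
        have := Submodule.finrank_lt_finrank_of_lt hlt
        omega
      have htot : Module.finrank F (Matrix (Fin 2) (Fin 2) F) = 4 := by
        rw [Module.finrank_matrix]
        simp
      refine Submodule.eq_of_le_of_finrank_le le_top ?_
      rw [finrank_top, htot]
      exact h4
  -- 1 ∉ L
  have h1L : (1 : Matrix (Fin 2) (Fin 2) F) ∉ L := by
    intro h
    apply hLne
    have hle : W2 ≤ L := sup_le le_rfl (span_le.2 (by rintro x rfl; exact h))
    exact top_unique (hW2top ▸ hle)
  have hscal : ∀ c : F, c • (1 : Matrix (Fin 2) (Fin 2) F) ∈ L → c = 0 := by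
    intro c hc
    by_contra hcne
    exact h1L (by simpa [smul_smul, inv_mul_cancel₀ hcne] using L.smul_mem c⁻¹ hc)
  -- determinant vanishes on the span of S
  have hdetS : ∀ x ∈ S, x.det = 0 := by
    intro x hx
    have heq : x.det • (1 : Matrix (Fin 2) (Fin 2) F) = x.trace • x - x * x := by
      rw [sq_eq]; abel
    exact hscal _ (heq ▸ sub_mem (L.smul_mem _ (hw1 x hx)) (hw2 x hx x hx))
  have hdet2 : ∀ x ∈ S, ∀ y ∈ S, (x + y).det = 0 := by
    intro x hx y hy
    have hmem : (x + y) * (x + y) ∈ L := by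
      rw [add_mul, mul_add, mul_add]
      exact add_mem (add_mem (hw2 x hx x hx) (hw2 x hx y hy))
        (add_mem (hw2 y hy x hx) (hw2 y hy y hy))
    have heq : (x + y).det • (1 : Matrix (Fin 2) (Fin 2) F)
        = (x + y).trace • (x + y) - (x + y) * (x + y) := by
      rw [sq_eq]; abel
    exact hscal _ (heq ▸ sub_mem (L.smul_mem _ (add_mem (hw1 x hx) (hw1 y hy))) hmem)
  have hBS : ∀ x ∈ S, ∀ y ∈ S, Bform x y = 0 := by
    intro x hx y hy
    have h := det_add' x y
    rw [hdet2 x hx y hy, hdetS x hx, hdetS y hy] at h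
    simpa using h.symm
  set U : Submodule F (Matrix (Fin 2) (Fin 2) F) := span F S with hUdef
  have hBU : ∀ x ∈ U, ∀ y ∈ U, Bform x y = 0 := by
    intro x hx
    induction hx using span_induction with
    | mem s hs =>
      intro y hy
      induction hy using span_induction with
      | mem t ht => exact hBS s hs t ht
      | zero => exact B_zero_right s
      | add y z _ _ h₁ h₂ => rw [B_add_right, h₁, h₂, add_zero]
      | smul c y _ h₁ => rw [B_smul_right, h₁, mul_zero]
    | zero => intro y hy; exact B_zero_left y
    | add x z _ _ h₁ h₂ => intro y hy; rw [B_add_left, h₁ y hy, h₂ y hy, add_zero]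
    | smul c x _ h₁ => intro y hy; rw [B_smul_left, h₁ y hy, mul_zero]
  have hdetU : ∀ x ∈ U, x.det = 0 := by
    intro x hx
    induction hx using span_induction with
    | mem s hs => exact hdetS s hs
    | zero => simp
    | add x y hxm hym h₁ h₂ => rw [det_add', h₁, h₂, hBU x hxm y hym, add_zero, add_zero]
    | smul c x hxm h₁ => simp [Matrix.det_smul, h₁]
  have haU : a ∈ U := subset_span haS
  obtain ⟨u, w, hadecomp⟩ := rank_one_decomp a ha0 (hdetU a haU)
  have hu0 : u ≠ 0 := by
    rintro rfl
    exact ha0 (by rw [hadecomp]; ext i j; simp [vecMulVec_apply])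
  have hw0 : w ≠ 0 := by
    rintro rfl
    exact ha0 (by rw [hadecomp]; ext i j; simp [vecMulVec_apply])
  set v : Fin 2 → F := ![w 1, -(w 0)] with hvdef
  set φ : Fin 2 → F := ![u 1, -(u 0)] with hφdef
  have hv0 : v ≠ 0 := by
    intro h
    apply hw0
    have h1 := congrFun h 0
    have h2 := congrFun h 1
    simp [hvdef] at h1 h2
    ext i
    fin_cases i <;> simp [h1, h2]
  have hφ0 : φ ≠ 0 := by
    intro h
    apply hu0
    have h1 := congrFun h 0
    have h2 := congrFun h 1
    simp [hφdef] at h1 h2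
    ext i
    fin_cases i <;> simp [h1, h2]
  -- the dichotomy: common right kernel or common left kernel
  have dich : (∀ c ∈ S, c *ᵥ v = 0) ∨ (∀ c ∈ S, φ ᵥ* c = 0) := by
    by_contra hcon
    push_neg at hcon
    obtain ⟨⟨c, hcS, hcv⟩, x, hxS, hφx⟩ := hcon
    obtain ⟨y, hyU, hyv, hφy⟩ : ∃ y, y ∈ U ∧ y *ᵥ v ≠ 0 ∧ φ ᵥ* y ≠ 0 := by
      by_cases h1 : φ ᵥ* c = 0
      · by_cases h2 : x *ᵥ v = 0
        · refine ⟨c + x, add_mem (subset_span hcS) (subset_span hxS), ?_, ?_⟩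
          · rw [Matrix.add_mulVec, h2, add_zero]; exact hcv
          · rw [Matrix.vecMul_add, h1, zero_add]; exact hφx
        · exact ⟨x, subset_span hxS, h2, hφx⟩
      · exact ⟨c, subset_span hcS, hcv, h1⟩
    have hy0 : y ≠ 0 := by rintro rfl; rw [Matrix.zero_mulVec] at hyv; exact hyv rfl
    obtain ⟨u', w', hydecomp⟩ := rank_one_decomp y hy0 (hdetU y hyU)
    have h1 : w' ⬝ᵥ v ≠ 0 := by
      rw [hydecomp, vecMulVec_mulVec'] at hyv
      intro h'
      rw [h', zero_smul] at hyv
      exact hyv rfl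
    have h2 : φ ⬝ᵥ u' ≠ 0 := by
      rw [hydecomp, vecMul_vecMulVec'] at hφy
      intro h'
      rw [h', zero_smul] at hφy
      exact hφy rfl
    have hB := hBU a haU y hyU
    rw [hadecomp, hydecomp, B_vecMulVec, ← hvdef, ← hφdef] at hB
    exact mul_ne_zero h2 h1 hB
  have hclosure_span :
      (⊤ : Submodule F (Matrix (Fin 2) (Fin 2) F))
        = span F (Submonoid.closure S : Set (Matrix (Fin 2) (Fin 2) F)) := by
    have h := Algebra.adjoin_eq_span (R := F) (s := S)
    rw [hgen] at h
    simpa using h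
  rcases dich with hker | hcoker
  · -- common right kernel
    have hcl : ∀ m ∈ Submonoid.closure S, m *ᵥ v ∈ span F {v} := by
      intro m hm
      induction hm using Submonoid.closure_induction with
      | mem s hs => rw [hker s hs]; exact zero_mem _
      | one => rw [Matrix.one_mulVec]; exact subset_span rfl
      | mul m n _ _ h₁ h₂ =>
        obtain ⟨t, ht⟩ := mem_span_singleton.1 h₂
        rw [← Matrix.mulVec_mulVec, ← ht, Matrix.mulVec_smul]
        exact smul_mem _ _ h₁
    have htop : ∀ m : Matrix (Fin 2) (Fin 2) F, m *ᵥ v ∈ span F {v} := by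
      intro m
      have hm : m ∈ span F (Submonoid.closure S : Set (Matrix (Fin 2) (Fin 2) F)) := by
        rw [← hclosure_span]; trivial
      induction hm using span_induction with
      | mem s hs => exact hcl s hs
      | zero => rw [Matrix.zero_mulVec]; exact zero_mem _
      | add x y _ _ h₁ h₂ => rw [Matrix.add_mulVec]; exact add_mem h₁ h₂
      | smul c x _ h₁ => rw [Matrix.smul_mulVec]; exact smul_mem _ _ h₁
    have hv' : v 0 ≠ 0 ∨ v 1 ≠ 0 := by
      by_contra h'
      push_neg at h'
      exact hv0 (funext fun i => by fin_cases i <;> simp [h'.1, h'.2])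
    rcases hv' with h | h
    · have hmem := htop !![0,0;1/(v 0),0]
      have hmv : (!![0,0;1/(v 0),0] : Matrix (Fin 2) (Fin 2) F) *ᵥ v = ![0,1] := by
        funext i
        fin_cases i <;>
          simp [Matrix.mulVec, dotProduct, Fin.sum_univ_two] <;> field_simp
      rw [hmv] at hmem
      obtain ⟨t, ht⟩ := mem_span_singleton.1 hmem
      have h0 := congrFun ht 0
      have h1 := congrFun ht 1
      simp [smul_eq_mul] at h0 h1
      rcases h0 with rfl | h'
      · simp at h1
      · exact h h'
    · have hmem := htop !![0,1/(v 1);0,0]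
      have hmv : (!![0,1/(v 1);0,0] : Matrix (Fin 2) (Fin 2) F) *ᵥ v = ![1,0] := by
        funext i
        fin_cases i <;>
          simp [Matrix.mulVec, dotProduct, Fin.sum_univ_two] <;> field_simp
      rw [hmv] at hmem
      obtain ⟨t, ht⟩ := mem_span_singleton.1 hmem
      have h0 := congrFun ht 0
      have h1 := congrFun ht 1
      simp [smul_eq_mul] at h0 h1
      rcases h1 with rfl | h'
      · simp at h0
      · exact h h'
  · -- common left kernel
    have hcl : ∀ m ∈ Submonoid.closure S, φ ᵥ* m ∈ span F {φ} := by
      intro m hm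
      induction hm using Submonoid.closure_induction with
      | mem s hs => rw [hcoker s hs]; exact zero_mem _
      | one => rw [Matrix.vecMul_one]; exact subset_span rfl
      | mul m n _ _ h₁ h₂ =>
        obtain ⟨t, ht⟩ := mem_span_singleton.1 h₁
        rw [← Matrix.vecMul_vecMul, ← ht, Matrix.smul_vecMul]
        exact smul_mem _ _ h₂
    have htop : ∀ m : Matrix (Fin 2) (Fin 2) F, φ ᵥ* m ∈ span F {φ} := by
      intro m
      have hm : m ∈ span F (Submonoid.closure S : Set (Matrix (Fin 2) (Fin 2) F)) := by
        rw [← hclosure_span]; trivial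
      induction hm using span_induction with
      | mem s hs => exact hcl s hs
      | zero => rw [Matrix.vecMul_zero]; exact zero_mem _
      | add x y _ _ h₁ h₂ => rw [Matrix.vecMul_add]; exact add_mem h₁ h₂
      | smul c x _ h₁ => rw [vecMul_matrix_smul]; exact smul_mem _ _ h₁
    have hφ' : φ 0 ≠ 0 ∨ φ 1 ≠ 0 := by
      by_contra h'
      push_neg at h'
      exact hφ0 (funext fun i => by fin_cases i <;> simp [h'.1, h'.2])
    rcases hφ' with h | h
    · have hmem := htop !![0,1/(φ 0);0,0]
      have hmv : φ ᵥ* (!![0,1/(φ 0);0,0] : Matrix (Fin 2) (Fin 2) F) = ![0,1] := by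
        funext j
        fin_cases j <;>
          simp [Matrix.vecMul, dotProduct, Fin.sum_univ_two] <;> field_simp
      rw [hmv] at hmem
      obtain ⟨t, ht⟩ := mem_span_singleton.1 hmem
      have h0 := congrFun ht 0
      have h1 := congrFun ht 1
      simp [smul_eq_mul] at h0 h1
      rcases h0 with rfl | h'
      · simp at h1
      · exact h h'
    · have hmem := htop !![0,0;1/(φ 1),0]
      have hmv : φ ᵥ* (!![0,0;1/(φ 1),0] : Matrix (Fin 2) (Fin 2) F) = ![1,0] := by
        funext j
        fin_cases j <;>
          simp [Matrix.vecMul, dotProduct, Fin.sum_univ_two] <;> field_simp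
      rw [hmv] at hmem
      obtain ⟨t, ht⟩ := mem_span_singleton.1 hmem
      have h0 := congrFun ht 0
      have h1 := congrFun ht 1
      simp [smul_eq_mul] at h0 h1
      rcases h1 with rfl | h'
      · simp at h0
      · exact h h'
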